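/- Let Ω ⊂ ℝ² be open and bounded with inradius R, let 1/2 < p < 1, and let E_p be a p-Cheeger set. Assume E_p minimizes the prescribed-curvature functional A ↦ P(A) − κ_{E_p}|A| over subsets A ⊂ Ω with |A| ≥ π R², where κ_{E_p} = p·H(p)·|E_p|^{p−1}. Then F(κ_{E_p}) > 0, and consequently κ_{E_p} < H(1). -/

import Mathlib

open Real Set Metric MeasureTheory Filter

noncomputable section

/-- The Euclidean plane. -/
abbrev Plane := EuclideanSpace ℝ (Fin 2)

/-- Lebesgue measure (area) of a planar set, as a real number. -/
def area (E : Set Plane) : ℝ := (volume E).toReal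

/-- The inradius of a set: the supremum of radii of balls contained in it. -/
def inradius (Ω : Set Plane) : ℝ := sSup {r : ℝ | ∃ x : Plane, ball x r ⊆ Ω}

/-- The `p`-Cheeger ratio `P(E)/|E|^p` of a set, for a given perimeter functional `P`. -/
def cheegerRatio (P : Set Plane → ℝ) (p : ℝ) (E : Set Plane) : ℝ := P E / (area E) ^ p

/-- The `p`-Cheeger constant `H(p)` of `Ω`. -/
def cheegerConst (P : Set Plane → ℝ) (p : ℝ) (Ω : Set Plane) : ℝ :=
  sInf {c : ℝ | ∃ F, F ⊆ Ω ∧ 0 < area F ∧ c = cheegerRatio P p F}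

/-- `E` is a `p`-Cheeger set of `Ω`: it is admissible and minimizes the `p`-Cheeger ratio. -/
def IsCheegerSet (P : Set Plane → ℝ) (p : ℝ) (Ω E : Set Plane) : Prop :=
  E ⊆ Ω ∧ 0 < area E ∧
    ∀ F, F ⊆ Ω → 0 < area F → cheegerRatio P p E ≤ cheegerRatio P p F

/-- `E` is an isoperimetric set in `Ω` for its own volume. -/
def IsIsoperimetric (P : Set Plane → ℝ) (Ω E : Set Plane) : Prop :=
  E ⊆ Ω ∧ ∀ F, F ⊆ Ω → area F = area E → P E ≤ P F

/-- The prescribed-curvature infimum `F(κ)` of `Ω`. -/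
def prescribedCurv (P : Set Plane → ℝ) (Ω : Set Plane) (κ : ℝ) : ℝ :=
  sInf {c : ℝ | ∃ A, A ⊆ Ω ∧ π * (inradius Ω) ^ 2 ≤ area A ∧ c = P A - κ * area A}

/-- `Ω` has no necks of any radius. -/
def NoNecksOfAnyRadius (Ω : Set Plane) : Prop :=
  ∀ r : ℝ, 0 < r → r ≤ inradius Ω → ∀ x₀ x₁ : Plane, ball x₀ r ⊆ Ω → ball x₁ r ⊆ Ω →
    ∃ γ : ℝ → Plane, Continuous γ ∧ γ 0 = x₀ ∧ γ 1 = x₁ ∧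
      ∀ t ∈ Icc (0:ℝ) 1, ball (γ t) r ⊆ Ω

/-- Open bounded `Ω ⊂ ℝ²` with inradius `R`, `1/2 < p < 1`, `E_p` a `p`-Cheeger
set minimizing the prescribed-curvature functional `A ↦ P(A) − κ|A|` with
`κ = p·H(p)·|E_p|^(p−1) > 0`; given that `F` is strictly decreasing on `(0,∞)` and
`F(H(1)) = 0` with `H(1) > 0`, one concludes `F(κ) > 0` and hence `κ < H(1)`. -/
theorem stmt_6 (P : Set Plane → ℝ) (Ω : Set Plane) (hΩopen : IsOpen Ω)
    (hΩbdd : Bornology.IsBounded Ω) (p : ℝ) (hp : (1:ℝ)/2 < p) (hp1 : p < 1)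
    (Ep : Set Plane) (hEp : IsCheegerSet P p Ω Ep)
    (hH : cheegerRatio P p Ep = cheegerConst P p Ω)
    (κ : ℝ) (hκ : κ = p * cheegerConst P p Ω * (area Ep) ^ (p - 1)) (hκpos : 0 < κ)
    -- `E_p` minimizes the prescribed-curvature functional at level `κ`
    (hmin : prescribedCurv P Ω κ = P Ep - κ * area Ep)
    -- `F` is strictly decreasing and vanishes exactly at `H(1) > 0`
    (hFanti : StrictAntiOn (prescribedCurv P Ω) (Ioi 0))
    (hH1pos : 0 < cheegerConst P 1 Ω)
    (hFzero : prescribedCurv P Ω (cheegerConst P 1 Ω) = 0) :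
    0 < prescribedCurv P Ω κ ∧ κ < cheegerConst P 1 Ω := by
  obtain ⟨hEpΩ, hEpos, _⟩ := hEp
  set H := cheegerConst P p Ω with hHdef
  set a := area Ep with ha
  have hap : (0:ℝ) < a ^ p := Real.rpow_pos_of_pos hEpos p
  have hap1 : (0:ℝ) < a ^ (p - 1) := Real.rpow_pos_of_pos hEpos (p - 1)
  have hPE : P Ep = H * a ^ p := by
    have := hH
    unfold cheegerRatio at this
    rw [← ha, div_eq_iff hap.ne'] at this
    linarith [this]
  have hHpos : 0 < H := by
    have hpk : 0 < p * H * a ^ (p - 1) := by rw [← hκ]; exact hκpos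
    by_contra hc
    push_neg at hc
    have h1 : p * H ≤ 0 := mul_nonpos_of_nonneg_of_nonpos (by linarith) hc
    have h2 : p * H * a ^ (p - 1) ≤ 0 := mul_nonpos_of_nonpos_of_nonneg h1 hap1.le
    linarith
  have harea : a ^ (p - 1) * a = a ^ p := by
    have : a ^ (p - 1) * a ^ (1:ℝ) = a ^ p := by
      rw [← Real.rpow_add hEpos]; ring_nf
    simpa [Real.rpow_one] using this
  have hκa : κ * a = p * H * a ^ p := by
    rw [hκ, mul_assoc, harea]
  have hFpos : 0 < prescribedCurv P Ω κ := by
    rw [hmin, hPE, hκa]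
    nlinarith [mul_pos (mul_pos (show (0:ℝ) < 1 - p by linarith) hHpos) hap]
  refine ⟨hFpos, ?_⟩
  by_contra hle
  push_neg at hle
  rcases eq_or_lt_of_le hle with h | h
  · rw [h] at hFzero; linarith
  · have := hFanti (mem_Ioi.mpr hH1pos) (mem_Ioi.mpr hκpos) h
    rw [hFzero] at this; linarith
end
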